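/- Let k = p^ℓ be a prime power and let (a,b) be a coprime pair with b a unit mod k (i.e., gcd(b,p)=1), b > 1, and suppose (x₀,y₀) is a coprime pair with |a·y₀ - b·x₀| = k. Then there exists a coprime pair (x,y) with |a·y - b·x| = k and 0 < |y| < b. -/

import Mathlib

theorem stmt_15 (p : ℤ) (ℓ : ℕ) (hp : Prime p) (hℓ : 1 ≤ ℓ)
    (k a b x₀ y₀ : ℤ) (hk : k = p ^ ℓ)
    (hab : IsCoprime a b) (hbp : ¬ p ∣ b) (hb : 1 < b)
    (hxy : IsCoprime x₀ y₀) (h : |a * y₀ - b * x₀| = k) :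
    ∃ x y : ℤ, IsCoprime x y ∧ |a * y - b * x| = k ∧ 0 < |y| ∧ |y| < b := by
  have hb0 : (0:ℤ) < b := by linarith
  set r := y₀ % b with hrdef
  have hr0 : 0 ≤ r := Int.emod_nonneg _ hb0.ne'
  have hrb : r < b := Int.emod_lt_of_pos _ hb0
  set q := y₀ / b with hqdef
  have hrval : r = y₀ - b * q := by
    have := Int.mul_ediv_add_emod y₀ b
    linarith
  -- r ≠ 0
  have hrne : r ≠ 0 := by
    intro h0
    have hby : b ∣ y₀ := Int.dvd_of_emod_eq_zero h0
    have hbd : b ∣ a * y₀ - b * x₀ :=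
      dvd_sub (hby.mul_left a) (Dvd.intro x₀ rfl)
    have hbk : b ∣ k := h ▸ (dvd_abs _ _).mpr hbd
    have hcop : IsCoprime (p ^ ℓ) b :=
      IsCoprime.pow_left ((hp.coprime_iff_not_dvd).mpr hbp)
    have hu : IsUnit b := hcop.isUnit_of_dvd' (hk ▸ hbk) dvd_rfl
    rcases Int.isUnit_iff.mp hu with h1 | h1 <;> omega
  have key : ∀ x y : ℤ, |a * y - b * x| = k → ¬ p ∣ y → IsCoprime x y := by
    intro x y hxyk hpy
    rw [Int.isCoprime_iff_gcd_eq_one]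
    by_contra hg
    have hd : (Int.gcd x y : ℤ) ∣ a * y - b * x :=
      dvd_sub (((Int.gcd_dvd_right x y : (Int.gcd x y : ℤ) ∣ y)).mul_left a) (((Int.gcd_dvd_left x y : (Int.gcd x y : ℤ) ∣ x)).mul_left b)
    have hdk : (Int.gcd x y : ℤ) ∣ k := hxyk ▸ (dvd_abs _ _).mpr hd
    have hdn : Int.gcd x y ∣ p.natAbs ^ ℓ := by
      have := Int.natAbs_dvd_natAbs.mpr hdk
      simpa [hk, Int.natAbs_pow] using this
    have hpn : p.natAbs.Prime := Int.prime_iff_natAbs_prime.mp hp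
    obtain ⟨i, hi, hdi⟩ := (Nat.dvd_prime_pow hpn).mp hdn
    have hine : i ≠ 0 := by
      intro h0
      rw [h0, pow_zero] at hdi
      exact hg hdi
    have hpg : p.natAbs ∣ Int.gcd x y := hdi ▸ dvd_pow_self _ hine
    have hpy' : p.natAbs ∣ y.natAbs := hpg.trans (Nat.gcd_dvd_right _ _)
    exact hpy (Int.natAbs_dvd_natAbs.mp hpy')
  by_cases hpr : p ∣ r
  · -- use y = r - b
    have hprb : ¬ p ∣ (r - b) := by
      intro hd
      exact hbp (by simpa using dvd_sub hpr hd)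
    have e2 : a * (r - b) - b * (x₀ + (-q - 1) * a) = a * y₀ - b * x₀ := by
      rw [hrval]; ring
    have habs : |a * (r - b) - b * (x₀ + (-q - 1) * a)| = k := by rw [e2]; exact h
    refine ⟨x₀ + (-q - 1) * a, r - b, key _ _ habs hprb, habs, ?_, ?_⟩
    · rw [abs_of_neg (by omega)]; omega
    · rw [abs_of_neg (by omega)]; omega
  · -- use y = r
    have e1 : a * r - b * (x₀ + (-q) * a) = a * y₀ - b * x₀ := by
      rw [hrval]; ring
    have habs : |a * r - b * (x₀ + (-q) * a)| = k := by rw [e1]; exact h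
    refine ⟨x₀ + (-q) * a, r, key _ _ habs hpr, habs, ?_, ?_⟩
    · rw [abs_of_nonneg hr0]; omega
    · rw [abs_of_nonneg hr0]; omega
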